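/- For the Kraus operators K_0 = (1/√2)diag(1,−1,0), K_1 = (1/√2)(−|0⟩⟨2| + |2⟩⟨1|), K_2 = (1/√2)(|1⟩⟨2| − |2⟩⟨0|) of the antisymmetric Werner–Holevo qutrit channel, the nine 6×6 matrices K_i† K_j ⊕ K_i K_j† (i,j ∈ {0,1,2}) are linearly independent; hence this channel is an extreme point of the set of unital trace-preserving completely positive qutrit maps. -/
import Mathlib


open Matrix BigOperators

/-- Kraus operators of the antisymmetric Werner–Holevo qutrit channel. -/
noncomputable def whK : Fin 3 → Matrix (Fin 3) (Fin 3) ℂ :=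
  ![((1 / Real.sqrt 2 : ℝ) : ℂ) • !![1, 0, 0; 0, -1, 0; 0, 0, 0],
    ((1 / Real.sqrt 2 : ℝ) : ℂ) • !![0, 0, -1; 0, 0, 0; 0, 1, 0],
    ((1 / Real.sqrt 2 : ℝ) : ℂ) • !![0, 0, 0; 0, 0, 1; -1, 0, 0]]

/-- the nine block matrices `K_i† K_j ⊕ K_i K_j†` attached to the
antisymmetric Werner–Holevo channel are linearly independent, i.e. the channel
satisfies the Landau–Streater extremality criterion. -/
theorem wernerHolevo_extreme :
    LinearIndependent ℂ
      (fun p : Fin 3 × Fin 3 =>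
        Matrix.fromBlocks ((whK p.1)ᴴ * whK p.2) 0 0 (whK p.1 * (whK p.2)ᴴ)) := by
  rw [Fintype.linearIndependent_iff]
  intro g hg
  have key : ∀ i j : Fin 3,
      ∑ p : Fin 3 × Fin 3, g p *
        (Matrix.fromBlocks ((whK p.1)ᴴ * whK p.2) 0 0 (whK p.1 * (whK p.2)ᴴ))
          (Sum.inl i) (Sum.inl j) = 0 := by
    intro i j
    have := congrFun (congrFun hg (Sum.inl i)) (Sum.inl j)
    simpa [Matrix.sum_apply] using this
  have e02 := key 0 2
  have e12 := key 1 2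
  have e20 := key 2 0
  have e10 := key 1 0
  have e21 := key 2 1
  have e01 := key 0 1
  have e00 := key 0 0
  have e11 := key 1 1
  have e22 := key 2 2
  simp [Fintype.sum_prod_type, Fin.sum_univ_three, whK, Matrix.mul_apply,
    Matrix.vecHead, Matrix.vecTail] at e02 e12 e20 e10 e21 e01 e00 e11 e22
  have hne : (((Real.sqrt 2 : ℝ) : ℂ))⁻¹ * (((Real.sqrt 2 : ℝ) : ℂ))⁻¹ ≠ 0 := by
    have : ((Real.sqrt 2 : ℝ) : ℂ) ≠ 0 := by
      simpa using (by positivity : (0:ℝ) < Real.sqrt 2).ne'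
    exact mul_ne_zero (inv_ne_zero this) (inv_ne_zero this)
  have f00 : g (0, 0) + g (2, 2) = 0 := by
    have := mul_eq_zero.mp (by linear_combination e00 :
      (g (0, 0) + g (2, 2)) * ((((Real.sqrt 2 : ℝ) : ℂ))⁻¹ * (((Real.sqrt 2 : ℝ) : ℂ))⁻¹) = 0)
    tauto
  have f11 : g (0, 0) + g (1, 1) = 0 := by
    have := mul_eq_zero.mp (by linear_combination e11 :
      (g (0, 0) + g (1, 1)) * ((((Real.sqrt 2 : ℝ) : ℂ))⁻¹ * (((Real.sqrt 2 : ℝ) : ℂ))⁻¹) = 0)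
    tauto
  have f22 : g (1, 1) + g (2, 2) = 0 := by
    have := mul_eq_zero.mp (by linear_combination e22 :
      (g (1, 1) + g (2, 2)) * ((((Real.sqrt 2 : ℝ) : ℂ))⁻¹ * (((Real.sqrt 2 : ℝ) : ℂ))⁻¹) = 0)
    tauto
  have h1 : g (0, 0) = 0 := by linear_combination (f00 + f11 - f22) / 2
  have h2 : g (1, 1) = 0 := by linear_combination (f11 + f22 - f00) / 2
  have h3 : g (2, 2) = 0 := by linear_combination (f00 + f22 - f11) / 2
  intro p
  fin_cases p <;> assumption
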